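/- Let p, q be integers with 2 ≤ p < q, let γ > 0, and let ε > 0. Suppose a complex-valued sequence u = (u_n)_{n∈ℤ} satisfies ε(u_{n+1} − 2u_n + u_{n−1}) − u_n + |u_n|^{p−1}u_n − γ|u_n|^{q−1}u_n = 0 for all n ∈ ℤ and u_n → 0 as n → +∞ and as n → −∞. Then there exists θ ∈ ℝ such that e^{−iθ} u_n is real for every n ∈ ℤ. -/

import Mathlib

/-- For `2 ≤ p < q`, `γ > 0`, `ε > 0`, any solution of the stationary DNLS equation
`ε(u_{n+1} − 2u_n + u_{n−1}) − u_n + |u_n|^{p−1}u_n − γ|u_n|^{q−1}u_n = 0`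
that tends to `0` as `n → ±∞` has all components sharing a common phase:
there is `θ ∈ ℝ` with `e^{−iθ} u_n` real for every `n`. -/
theorem common_phase_of_decaying_solution (p q : ℕ) (hp : 2 ≤ p) (hpq : p < q)
    (γ : ℝ) (hγ : 0 < γ) (ε : ℝ) (hε : 0 < ε)
    (u : ℤ → ℂ)
    (heq : ∀ n : ℤ,
      (ε : ℂ) * (u (n + 1) - 2 * u n + u (n - 1)) - u n
        + (‖u n‖ : ℂ) ^ (p - 1) * u n - (γ : ℂ) * (‖u n‖ : ℂ) ^ (q - 1) * u n = 0)
    (htop : Filter.Tendsto u Filter.atTop (nhds 0))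
    (hbot : Filter.Tendsto u Filter.atBot (nhds 0)) :
    ∃ θ : ℝ, ∀ n : ℤ, (Complex.exp (-(θ : ℂ) * Complex.I) * u n).im = 0 := by
  classical
  have hε' : (ε : ℂ) ≠ 0 := by exact_mod_cast hε.ne'
  set c : ℤ → ℝ := fun n => (2*ε + 1 - ‖u n‖^(p-1) + γ*‖u n‖^(q-1))/ε with hc
  have hrec : ∀ n : ℤ, u (n+1) = ((c n : ℝ) : ℂ) * u n - u (n-1) := by
    intro n
    have h := heq n
    rw [hc]
    push_cast
    field_simp
    linear_combination h
  set J : ℤ → ℂ := fun n => (starRingEnd ℂ) (u n) * u (n+1) - u n * (starRingEnd ℂ) (u (n+1)) with hJ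
  have hstep : ∀ n : ℤ, J (n+1) = J n := by
    intro n
    have h1 : u (n+1+1) = ((c (n+1) : ℝ) : ℂ) * u (n+1) - u n := by
      have := hrec (n+1); simpa using this
    simp only [hJ, h1, map_sub, map_mul, Complex.conj_ofReal]
    ring
  have hconst : ∀ n : ℤ, J n = J 0 := by
    intro n
    induction n using Int.induction_on with
    | zero => rfl
    | succ k ih => rw [hstep k, ih]
    | pred k ih =>
        have h2 := hstep (-(k:ℤ)-1)
        rw [show (-(k:ℤ)-1)+1 = -(k:ℤ) by ring] at h2
        rw [← h2]
        exact ih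
  have hshift : Filter.Tendsto (fun n : ℤ => u (n+1)) Filter.atTop (nhds 0) :=
    htop.comp (Filter.tendsto_atTop_add_const_right _ 1 Filter.tendsto_id)
  have hconj : ∀ {f : ℤ → ℂ}, Filter.Tendsto f Filter.atTop (nhds 0) →
      Filter.Tendsto (fun n => (starRingEnd ℂ) (f n)) Filter.atTop (nhds 0) := by
    intro f hf
    have := (Complex.continuous_conj.tendsto 0).comp hf
    simpa [Function.comp_def] using this
  have hJtop : Filter.Tendsto J Filter.atTop (nhds 0) := by
    have := ((hconj htop).mul hshift).sub (htop.mul (hconj hshift))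
    simpa [hJ] using this
  have hJzero : ∀ n, J n = 0 := by
    have hC : Filter.Tendsto J Filter.atTop (nhds (J 0)) := by
      have : J = fun _ => J 0 := funext hconst
      rw [this]; exact tendsto_const_nhds
    have h0 : J 0 = 0 := tendsto_nhds_unique hC hJtop
    intro n; rw [hconst n, h0]
  have hpar : ∀ n : ℤ, (starRingEnd ℂ) (u n) * u (n+1) = u n * (starRingEnd ℂ) (u (n+1)) := by
    intro n
    have h := hJzero n
    simp only [hJ] at h
    exact sub_eq_zero.mp h
  -- now pick θ
  by_cases hz : ∀ n : ℤ, u n = 0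
  · exact ⟨0, fun n => by simp [hz n]⟩
  push_neg at hz
  obtain ⟨m, hm⟩ := hz
  refine ⟨Complex.arg (u m), fun n => ?_⟩
  set e : ℂ := Complex.exp (-(Complex.arg (u m) : ℂ) * Complex.I) with he
  set v : ℤ → ℂ := fun n => e * u n with hv
  have hce : (starRingEnd ℂ) e * e = 1 := by
    rw [he, ← Complex.exp_conj, ← Complex.exp_add]
    simp [map_mul, Complex.conj_I, Complex.conj_ofReal]
  have hvm : v m = (‖u m‖ : ℂ) := by
    show e * u m = (‖u m‖ : ℂ)
    calc e * u m = (‖u m‖ : ℂ) * (e * Complex.exp ((Complex.arg (u m) : ℂ) * Complex.I)) := by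
          conv_lhs => rw [← Complex.norm_mul_exp_arg_mul_I (u m)]
          ring
      _ = (‖u m‖ : ℂ) := by
          rw [he, ← Complex.exp_add,
            show -(Complex.arg (u m) : ℂ) * Complex.I + (Complex.arg (u m) : ℂ) * Complex.I = 0 by ring,
            Complex.exp_zero, mul_one]
  have hvm' : (starRingEnd ℂ) (v m) = v m := by rw [hvm, Complex.conj_ofReal]
  have hvmne : v m ≠ 0 := by
    rw [hv]; exact mul_ne_zero (Complex.exp_ne_zero _) hm
  -- v satisfies same recurrence
  have hvrec : ∀ k : ℤ, v (k+1) = ((c k : ℝ) : ℂ) * v k - v (k-1) := by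
    intro k; rw [hv]; simp only []
    rw [hrec k]; ring
  -- conj(v n) v(n+1) = v n conj(v(n+1))
  have hvpar : ∀ k : ℤ, (starRingEnd ℂ) (v k) * v (k+1) = v k * (starRingEnd ℂ) (v (k+1)) := by
    intro k
    simp only [hv, map_mul]
    have h := hpar k
    calc (starRingEnd ℂ) e * (starRingEnd ℂ) (u k) * (e * u (k+1))
        = ((starRingEnd ℂ) e * e) * ((starRingEnd ℂ) (u k) * u (k+1)) := by ring
      _ = ((starRingEnd ℂ) e * e) * (u k * (starRingEnd ℂ) (u (k+1))) := by rw [h]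
      _ = e * u k * ((starRingEnd ℂ) e * (starRingEnd ℂ) (u (k+1))) := by ring
  -- v (m+1) real
  have hvm1 : (starRingEnd ℂ) (v (m+1)) = v (m+1) := by
    have h := hvpar m
    rw [hvm'] at h
    have h2 : v m * ((starRingEnd ℂ) (v (m+1)) - v (m+1)) = 0 := by
      rw [mul_sub, ← h]; ring
    rcases mul_eq_zero.mp h2 with h3 | h3
    · exact absurd h3 hvmne
    · exact sub_eq_zero.mp h3
  -- real propagation
  have key : ∀ k : ℤ, (starRingEnd ℂ) (v (m+k)) = v (m+k) ∧ (starRingEnd ℂ) (v (m+k+1)) = v (m+k+1) := by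
    intro k
    induction k using Int.induction_on with
    | zero => simpa using ⟨hvm', hvm1⟩
    | succ j ih =>
        obtain ⟨h1, h2⟩ := ih
        refine ⟨by simpa [add_assoc] using h2, ?_⟩
        have hr := hvrec (m + j + 1)
        rw [show m + (j:ℤ) + 1 - 1 = m + j by ring] at hr
        rw [show m + ((j:ℤ)+1) + 1 = (m + j + 1) + 1 by ring, hr]
        rw [map_sub, map_mul, Complex.conj_ofReal, h2, h1]
    | pred j ih =>
        obtain ⟨h1, h2⟩ := ih
        constructor
        · have hr := hvrec (m + -(j:ℤ))
          rw [show m + -(j:ℤ) - 1 = m + (-(j:ℤ) - 1) by ring] at hr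
          have hthis : v (m + (-(j:ℤ) - 1)) = ((c (m + -(j:ℤ)) : ℝ) : ℂ) * v (m + -(j:ℤ)) - v (m + -(j:ℤ) + 1) := by
            linear_combination hr
          rw [hthis, map_sub, map_mul, Complex.conj_ofReal, h1, h2]
        · rw [show m + (-(j:ℤ) - 1) + 1 = m + -(j:ℤ) by ring]
          exact h1
  have hfin : (starRingEnd ℂ) (v n) = v n := by
    have := (key (n - m)).1
    rwa [show m + (n - m) = n by ring] at this
  have := Complex.conj_eq_iff_im.mp hfin
  simpa [hv, he] using this
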